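/- In a canonical code on alphabet size σ (a power of two for simplicity), any codeword whose maximal leading run of 1s has length p and which has total length greater than p satisfies: the suffix following position p+1 has length strictly less than log₂ σ, i.e., |C| − p − 1 < log₂ σ. -/

import Mathlib

inductive BTree where
  | leaf : BTree
  | node : BTree → BTree → BTree

namespace BTree

def codewords : BTree → List (List Bool)
  | .leaf => [[]]
  | .node l r => (codewords l).map (List.cons false) ++ (codewords r).map (List.cons true)

def numLeaves : BTree → ℕ
  | .leaf => 1
  | .node l r => numLeaves l + numLeaves r

/-- Codewords read left to right are strictly increasing lexicographically
with non-decreasing lengths. -/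
def Canonical (t : BTree) : Prop :=
  (codewords t).Chain' (fun a b => List.Lex (· < ·) a b) ∧
  (codewords t).Chain' (fun a b => a.length ≤ b.length)

/-- Length of the maximal leading run of 1-bits. -/
def leadOnes (C : List Bool) : ℕ := (C.takeWhile id).length

theorem one_le_numLeaves (t : BTree) : 1 ≤ numLeaves t := by
  induction t with
  | leaf => simp [numLeaves]
  | node l r ihl ihr => simp [numLeaves]; omega

theorem pow_le_numLeaves (t : BTree) (d : ℕ)
    (h : ∀ C ∈ codewords t, d ≤ C.length) : 2 ^ d ≤ numLeaves t := by
  induction t generalizing d with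
  | leaf =>
    have h0 := h [] (by simp [codewords])
    simp only [List.length_nil, Nat.le_zero] at h0
    simp [numLeaves, h0]
  | node l r ihl ihr =>
    cases d with
    | zero => simpa using one_le_numLeaves _
    | succ e =>
      have hl := ihl e (fun C hC => by
        have := h (false :: C)
          (List.mem_append_left _ (List.mem_map_of_mem (f := List.cons false) hC))
        simpa using this)
      have hr := ihr e (fun C hC => by
        have := h (true :: C)
          (List.mem_append_right _ (List.mem_map_of_mem (f := List.cons true) hC))
        simpa using this)
      simp only [numLeaves, pow_succ]
      omega

theorem key (t : BTree)
    (hlen : (codewords t).Pairwise (fun a b => a.length ≤ b.length))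
    (p : ℕ) (S : List Bool)
    (hC : List.replicate p true ++ false :: S ∈ codewords t) :
    2 ^ S.length < numLeaves t := by
  induction t generalizing p with
  | leaf =>
    simp [codewords] at hC
  | node l r ihl ihr =>
    simp only [codewords, List.mem_append, List.mem_map] at hC
    rw [codewords, List.pairwise_append] at hlen
    rcases hC with ⟨C', hC', heq⟩ | ⟨C', hC', heq⟩
    · -- false :: C' = replicate p true ++ false :: S, so p = 0, C' = S
      cases p with
      | zero =>
        simp only [List.replicate_zero, List.nil_append, List.cons.injEq, true_and] at heq
        have hC'' : S ∈ codewords l := heq ▸ hC'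
        have hr : 2 ^ S.length ≤ numLeaves r := by
          refine pow_le_numLeaves r S.length (fun D hD => ?_)
          have := hlen.2.2 _ (List.mem_map_of_mem (f := List.cons false) hC'')
            _ (List.mem_map_of_mem (f := List.cons true) hD)
          simpa using this
        have := one_le_numLeaves l
        simp only [numLeaves]; omega
      | succ q =>
        rw [List.replicate_succ] at heq
        simp at heq
    · cases p with
      | zero => simp at heq
      | succ q =>
        rw [List.replicate_succ] at heq
        simp only [List.cons_append, List.cons.injEq, true_and] at heq
        have hC'' : List.replicate q true ++ false :: S ∈ codewords r := heq ▸ hC'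
        have hpr : (codewords r).Pairwise (fun a b => a.length ≤ b.length) := by
          have := hlen.2.1
          rw [List.pairwise_map] at this
          exact this.imp (by intro a b h; simpa using h)
        have := ihr hpr q hC''
        simp only [numLeaves]; omega

end BTree

open BTree in
/-- In a canonical code on `σ` leaves (`σ` a power of two), any codeword whose
maximal leading run of 1s has length `p < |C|` satisfies
`|C| − p − 1 < log₂ σ`. -/
theorem stmt9 (t : BTree) (ht : Canonical t) (hpow : ∃ k : ℕ, numLeaves t = 2 ^ k)
    (C : List Bool) (hC : C ∈ codewords t) (hlt : leadOnes C < C.length) :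
    ((C.length : ℝ) - (leadOnes C : ℝ) - 1) < Real.logb 2 (numLeaves t : ℝ) := by
  obtain ⟨k, hk⟩ := hpow
  have hpdef : leadOnes C = (C.takeWhile id).length := rfl
  have hsplit : C.takeWhile id ++ C.dropWhile id = C := by simp
  have htake : C.takeWhile id = List.replicate (leadOnes C) true := by
    rw [List.eq_replicate_iff]
    exact ⟨hpdef.symm, fun b hb => by have := List.mem_takeWhile_imp hb; simpa using this⟩
  have hlen : (C.dropWhile id).length = C.length - leadOnes C := by
    have := congrArg List.length hsplit
    simp only [List.length_append] at this
    omega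
  have hne : C.dropWhile id ≠ [] := by
    intro h; rw [h] at hlen; simp at hlen; omega
  obtain ⟨b, S, hbs⟩ := List.exists_cons_of_ne_nil hne
  have hb : b = false := by
    have h1 := List.head_dropWhile_not id hne
    have h2 : (C.dropWhile id).head hne = b := by simp [hbs]
    rw [h2] at h1
    simpa using h1
  subst hb
  have hCe : C = List.replicate (leadOnes C) true ++ false :: S := by
    conv_lhs => rw [← hsplit, htake, hbs]
  have hS : S.length = C.length - leadOnes C - 1 := by
    rw [hbs] at hlen; simp at hlen; omega
  haveI : IsTrans (List Bool) (fun a b : List Bool => a.length ≤ b.length) :=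
    ⟨fun _ _ _ => Nat.le_trans⟩
  have hpair : (codewords t).Pairwise (fun a b => a.length ≤ b.length) :=
    List.isChain_iff_pairwise.mp ht.2
  have hkey : 2 ^ S.length < numLeaves t := key t hpair (leadOnes C) S (hCe ▸ hC)
  rw [hk] at hkey
  have hSk : S.length < k := (Nat.pow_lt_pow_iff_right (by norm_num)).mp hkey
  have hlog : Real.logb 2 ((numLeaves t : ℕ) : ℝ) = k := by
    rw [hk]
    push_cast
    rw [Real.logb, Real.log_pow]
    field_simp
  rw [hlog]
  have h1 : C.length < k + leadOnes C + 1 := by omega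
  have h2 : (C.length : ℝ) < k + leadOnes C + 1 := by exact_mod_cast h1
  linarith
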